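/- Let n ≥ 2 be an integer and let T ∈ Mₙ(ℂ). If T has property (CN) or T has property (CR), then T is normal, i.e. T·Tᴴ = Tᴴ·T. -/

import Mathlib

open Matrix

noncomputable def opN {n : ℕ} (M : Matrix (Fin n) (Fin n) ℂ) : ℝ :=
  ‖Matrix.toEuclideanCLM (𝕜 := ℂ) M‖

def HasCN {n : ℕ} (T : Matrix (Fin n) (Fin n) ℂ) : Prop :=
  ∀ P : Matrix (Fin n) (Fin n) ℂ, P * P = P → Pᴴ = P →
    opN (P * T * (1 - P)) = opN ((1 - P) * T * P)

def HasCR {n : ℕ} (T : Matrix (Fin n) (Fin n) ℂ) : Prop :=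
  ∀ P : Matrix (Fin n) (Fin n) ℂ, P * P = P → Pᴴ = P →
    (P * T * (1 - P)).rank = ((1 - P) * T * P).rank

open Module in
/-- Main induction: if every invariant subspace of `f` is invariant under the adjoint,
then `f` is normal. -/
lemma aux_normal : ∀ (N : ℕ) (E : Type) [NormedAddCommGroup E] [InnerProductSpace ℂ E]
    [FiniteDimensional ℂ E], finrank ℂ E = N →
    ∀ f : E →ₗ[ℂ] E,
      (∀ U : Submodule ℂ E, (∀ x ∈ U, f x ∈ U) → ∀ x ∈ U, LinearMap.adjoint f x ∈ U) →
      LinearMap.adjoint f ∘ₗ f = f ∘ₗ LinearMap.adjoint f := by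
  intro N
  induction N using Nat.strong_induction_on with
  | _ N ih =>
  intro E _ _ _ hEN f hf
  rcases subsingleton_or_nontrivial E with hE0 | hE1
  · apply LinearMap.ext; intro x; exact Subsingleton.elim _ _
  obtain ⟨μ, hμ⟩ := Module.End.exists_eigenvalue (f : Module.End ℂ E)
  obtain ⟨v, hvmem, hv0⟩ := hμ.exists_hasEigenvector
  have hfv : f v = μ • v := by
    simpa using Module.End.HasEigenvector.apply_eq_smul ⟨hvmem, hv0⟩
  set U : Submodule ℂ E := ℂ ∙ v with hU
  have hUinv : ∀ x ∈ U, f x ∈ U := by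
    intro x hx
    obtain ⟨c, rfl⟩ := Submodule.mem_span_singleton.mp hx
    rw [LinearMap.map_smul, hfv]
    exact Submodule.smul_mem _ _ (Submodule.smul_mem _ _ (Submodule.mem_span_singleton_self v))
  have hUadj : ∀ x ∈ U, LinearMap.adjoint f x ∈ U := hf U hUinv
  have hWinv : ∀ x ∈ Uᗮ, f x ∈ Uᗮ := by
    intro x hx
    rw [Submodule.mem_orthogonal]
    intro u hu
    rw [← LinearMap.adjoint_inner_left]
    exact hx _ (hUadj u hu)
  have hWadj : ∀ x ∈ Uᗮ, LinearMap.adjoint f x ∈ Uᗮ := hf Uᗮ hWinv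
  set g : Uᗮ →ₗ[ℂ] Uᗮ := f.restrict hWinv with hg
  set g' : Uᗮ →ₗ[ℂ] Uᗮ := (LinearMap.adjoint f).restrict hWadj with hg'
  have hadj_g : g' = LinearMap.adjoint g := by
    rw [LinearMap.eq_adjoint_iff]
    intro x y
    show (inner ℂ (((LinearMap.adjoint f).restrict hWadj x : Uᗮ) : E) (y : E) : ℂ) = _
    rw [LinearMap.restrict_apply]
    exact LinearMap.adjoint_inner_left f (y : E) (x : E)
  have hdim : finrank ℂ ↥Uᗮ < N := by
    have h1 : finrank ℂ U + finrank ℂ ↥Uᗮ = finrank ℂ E :=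
      Submodule.finrank_add_finrank_orthogonal U
    have h2 : finrank ℂ U = 1 := finrank_span_singleton hv0
    omega
  have hcomm : LinearMap.adjoint g ∘ₗ g = g ∘ₗ LinearMap.adjoint g := by
    refine ih _ hdim ↥Uᗮ rfl g ?_
    intro W hW x hx
    have hWE : ∀ z ∈ W.map Uᗮ.subtype, f z ∈ W.map Uᗮ.subtype := by
      intro z hz
      obtain ⟨w, hw, rfl⟩ := Submodule.mem_map.mp hz
      exact Submodule.mem_map.mpr ⟨g w, hW w hw, rfl⟩
    have := hf (W.map Uᗮ.subtype) hWE (x : E) (Submodule.mem_map.mpr ⟨x, hx, rfl⟩)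
    obtain ⟨w, hw, hwx⟩ := Submodule.mem_map.mp this
    rw [← hadj_g]
    have : g' x = w := by
      apply Subtype.ext
      rw [hg', LinearMap.restrict_apply]
      exact hwx.symm
    rwa [this]
  -- combine
  have key : ∀ x : E, LinearMap.adjoint f (f x) = f (LinearMap.adjoint f x) := by
    have hkeyU : ∀ x ∈ U, LinearMap.adjoint f (f x) = f (LinearMap.adjoint f x) := by
      intro x hx
      obtain ⟨c, rfl⟩ := Submodule.mem_span_singleton.mp hx
      obtain ⟨d, hd⟩ := Submodule.mem_span_singleton.mp
        (hUadj v (Submodule.mem_span_singleton_self v))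
      have hv : LinearMap.adjoint f (f v) = f (LinearMap.adjoint f v) := by
        rw [hfv, LinearMap.map_smul, ← hd, LinearMap.map_smul, hfv, smul_comm]
      simp only [LinearMap.map_smul, hv]
    have hkeyW : ∀ x ∈ Uᗮ, LinearMap.adjoint f (f x) = f (LinearMap.adjoint f x) := by
      intro x hx
      have h1 : LinearMap.adjoint f (f x) = ((LinearMap.adjoint g ∘ₗ g) ⟨x, hx⟩ : Uᗮ) := by
        rw [← hadj_g]
        show _ = ((g' (g ⟨x, hx⟩) : Uᗮ) : E)
        rw [hg', LinearMap.restrict_apply]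
        congr 1
      have h2 : f (LinearMap.adjoint f x) = ((g ∘ₗ LinearMap.adjoint g) ⟨x, hx⟩ : Uᗮ) := by
        rw [← hadj_g]
        show _ = ((g (g' ⟨x, hx⟩) : Uᗮ) : E)
        rw [hg, LinearMap.restrict_apply]
        rw [hg', LinearMap.restrict_apply]
      rw [h1, h2, hcomm]
    intro x
    have hx : x = (U.orthogonalProjectionOnto x : E) + (x - U.orthogonalProjectionOnto x) := by abel
    rw [hx, map_add, map_add, map_add, map_add,
      hkeyU _ (U.orthogonalProjectionOnto x).2,
      hkeyW (x - (U.orthogonalProjectionOnto x : E)) (Submodule.sub_starProjection_mem_orthogonal x)]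
  exact LinearMap.ext key

lemma matrix_rank_zero {n : ℕ} (M : Matrix (Fin n) (Fin n) ℂ) (h : M.rank = 0) : M = 0 := by
  have : LinearMap.range M.mulVecLin = ⊥ := by
    rw [← Submodule.finrank_eq_zero (R := ℂ)]
    exact h
  rw [LinearMap.range_eq_bot] at this
  ext i j
  have := congrFun (congrArg DFunLike.coe this) (Pi.single j 1)
  have h2 := congrFun this i
  simpa [Matrix.mulVecLin, Matrix.mulVec_single] using h2

set_option maxHeartbeats 1000000 in
set_option synthInstance.maxHeartbeats 400000 in
theorem stmt0 {n : ℕ} (hn : 2 ≤ n) (T : Matrix (Fin n) (Fin n) ℂ)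
    (h : HasCN T ∨ HasCR T) : T * Tᴴ = Tᴴ * T := by
  have hmul : ∀ A B : Matrix (Fin n) (Fin n) ℂ,
      Matrix.toEuclideanCLM (𝕜 := ℂ) (A * B)
        = Matrix.toEuclideanCLM (𝕜 := ℂ) A * Matrix.toEuclideanCLM (𝕜 := ℂ) B :=
    fun A B => _root_.map_mul _ A B
  have hone : Matrix.toEuclideanCLM (𝕜 := ℂ) (1 : Matrix (Fin n) (Fin n) ℂ) = 1 :=
    _root_.map_one _
  have hzero : Matrix.toEuclideanCLM (𝕜 := ℂ) (0 : Matrix (Fin n) (Fin n) ℂ) = 0 :=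
    _root_.map_zero _
  have hsub : ∀ A B : Matrix (Fin n) (Fin n) ℂ,
      Matrix.toEuclideanCLM (𝕜 := ℂ) (A - B)
        = Matrix.toEuclideanCLM (𝕜 := ℂ) A - Matrix.toEuclideanCLM (𝕜 := ℂ) B :=
    fun A B => _root_.map_sub _ A B
  have hstar : ∀ A : Matrix (Fin n) (Fin n) ℂ,
      Matrix.toEuclideanCLM (𝕜 := ℂ) (star A) = star (Matrix.toEuclideanCLM (𝕜 := ℂ) A) :=
    fun A => map_star _ A
  have hinj : ∀ A B : Matrix (Fin n) (Fin n) ℂ,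
      Matrix.toEuclideanCLM (𝕜 := ℂ) A = Matrix.toEuclideanCLM (𝕜 := ℂ) B → A = B := by
    intro A B hAB
    have h' := congrArg (Matrix.toEuclideanCLM (𝕜 := ℂ)).symm hAB
    simpa using h'
  -- Step 1: the key "reducing" property
  have key : ∀ P : Matrix (Fin n) (Fin n) ℂ, P * P = P → Pᴴ = P →
      (1 - P) * T * P = 0 → P * T * (1 - P) = 0 := by
    intro P h1 h2 h0
    rcases h with hCN | hCR
    · have hcn := hCN P h1 h2
      rw [h0] at hcn
      have hz : opN (P * T * (1 - P)) = 0 := by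
        rw [hcn]
        show ‖Matrix.toEuclideanCLM (𝕜 := ℂ) (0 : Matrix (Fin n) (Fin n) ℂ)‖ = 0
        rw [hzero, norm_zero]
      have h4 : Matrix.toEuclideanCLM (𝕜 := ℂ) (P * T * (1 - P)) = 0 := by
        have := norm_eq_zero.mp hz
        exact this
      apply hinj
      rw [h4, hzero]
    · have hcr := hCR P h1 h2
      rw [h0, Matrix.rank_zero] at hcr
      exact matrix_rank_zero _ hcr
  -- Step 2: translate to operators
  set f : EuclideanSpace ℂ (Fin n) →ₗ[ℂ] EuclideanSpace ℂ (Fin n) :=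
    Matrix.toEuclideanLin T with hfd
  have hadj : LinearMap.adjoint f = Matrix.toEuclideanLin Tᴴ :=
    (Matrix.toEuclideanLin_conjTranspose_eq_adjoint T).symm
  have hinv : ∀ U : Submodule ℂ (EuclideanSpace ℂ (Fin n)), (∀ x ∈ U, f x ∈ U) →
      ∀ x ∈ U, LinearMap.adjoint f x ∈ U := by
    intro U hU
    set p : EuclideanSpace ℂ (Fin n) →L[ℂ] EuclideanSpace ℂ (Fin n) :=
      U.subtypeL ∘L U.orthogonalProjectionOnto with hp
    have hpU : ∀ u : EuclideanSpace ℂ (Fin n), u ∈ U → p u = u := by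
      intro u hu
      exact Submodule.starProjection_eq_self_iff.mpr hu
    have hpW : ∀ u : EuclideanSpace ℂ (Fin n), u ∈ Uᗮ → p u = 0 := by
      intro u hu
      show (U.orthogonalProjectionOnto u : EuclideanSpace ℂ (Fin n)) = 0
      rw [Submodule.orthogonalProjectionOnto_apply_of_mem_orthogonal hu]
      rfl
    set P : Matrix (Fin n) (Fin n) ℂ := (Matrix.toEuclideanCLM (𝕜 := ℂ)).symm p with hP
    have hPp : Matrix.toEuclideanCLM (𝕜 := ℂ) P = p :=
      (Matrix.toEuclideanCLM (𝕜 := ℂ)).apply_symm_apply p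
    have hfth : ∀ x : EuclideanSpace ℂ (Fin n),
        Matrix.toEuclideanCLM (𝕜 := ℂ) T x = f x := fun x => rfl
    have h1 : P * P = P := by
      apply hinj
      rw [hmul, hPp]
      refine ContinuousLinearMap.ext fun x => ?_
      rw [ContinuousLinearMap.mul_apply]
      exact hpU _ (U.orthogonalProjectionOnto x).2
    have h2 : Pᴴ = P := by
      rw [← Matrix.star_eq_conjTranspose]
      apply hinj
      rw [hstar, hPp]
      exact (isSelfAdjoint_starProjection U).star_eq
    have h0 : (1 - P) * T * P = 0 := by
      apply hinj
      rw [hmul, hmul, hsub, hone, hPp, hzero]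
      refine ContinuousLinearMap.ext fun x => ?_
      rw [ContinuousLinearMap.mul_apply, ContinuousLinearMap.mul_apply,
        ContinuousLinearMap.zero_apply]
      show (1 - p) ((Matrix.toEuclideanCLM (𝕜 := ℂ) T) (p x)) = 0
      rw [hfth]
      have hfx : f (p x) ∈ U := hU _ ((U.orthogonalProjectionOnto x).2)
      show f (p x) - p (f (p x)) = 0
      rw [hpU _ hfx, sub_self]
    have hk := key P h1 h2 h0
    have hk' : Matrix.toEuclideanCLM (𝕜 := ℂ) P * Matrix.toEuclideanCLM (𝕜 := ℂ) T *
        (1 - Matrix.toEuclideanCLM (𝕜 := ℂ) P) = 0 := by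
      have := congrArg (Matrix.toEuclideanCLM (𝕜 := ℂ)) hk
      rw [hmul, hmul, hsub, hone, hzero] at this
      exact this
    rw [hPp] at hk'
    -- f maps Uᗮ into Uᗮ
    have hWinv : ∀ y ∈ Uᗮ, f y ∈ Uᗮ := by
      intro y hy
      have h3 : p (f y) = 0 := by
        have h5 := congrFun (congrArg DFunLike.coe hk') y
        simp only [ContinuousLinearMap.mul_apply, ContinuousLinearMap.sub_apply,
          ContinuousLinearMap.one_apply, ContinuousLinearMap.zero_apply] at h5
        rw [hpW _ hy, sub_zero, hfth] at h5
        exact h5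
      have h4 : f y - p (f y) ∈ Uᗮ := Submodule.sub_starProjection_mem_orthogonal (f y)
      rwa [h3, sub_zero] at h4
    intro x hx
    have hmem : LinearMap.adjoint f x ∈ Uᗮᗮ := by
      rw [Submodule.mem_orthogonal]
      intro y hy
      rw [LinearMap.adjoint_inner_right]
      have := (Submodule.mem_orthogonal U (f y)).mp (hWinv y hy) x hx
      rw [← inner_conj_symm, this, map_zero]
    rwa [Submodule.orthogonal_orthogonal] at hmem
  have hc := aux_normal (Module.finrank ℂ (EuclideanSpace ℂ (Fin n)))
    (EuclideanSpace ℂ (Fin n)) rfl f hinv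
  apply hinj
  rw [hmul, hmul]
  refine ContinuousLinearMap.ext fun x => ?_
  rw [ContinuousLinearMap.mul_apply, ContinuousLinearMap.mul_apply]
  show Matrix.toEuclideanCLM (𝕜 := ℂ) T (Matrix.toEuclideanCLM (𝕜 := ℂ) Tᴴ x)
    = Matrix.toEuclideanCLM (𝕜 := ℂ) Tᴴ (Matrix.toEuclideanCLM (𝕜 := ℂ) T x)
  have e1 : ∀ y : EuclideanSpace ℂ (Fin n), Matrix.toEuclideanCLM (𝕜 := ℂ) T y = f y :=
    fun y => rfl
  have e2 : ∀ y : EuclideanSpace ℂ (Fin n),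
      Matrix.toEuclideanCLM (𝕜 := ℂ) Tᴴ y = LinearMap.adjoint f y := by
    intro y; rw [hadj]; rfl
  rw [e1, e2, e1, e2]
  exact (congrFun (congrArg DFunLike.coe hc) x).symm
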